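/- Let R be a Bezout domain in which every nonzero nonunit element has only finitely many prime ideals minimal over it and in which every nonzero prime ideal is contained in only finitely many maximal ideals. Then every nonzero nonunit element a of R is an element of almost stable range 1, i.e. the quotient ring R/aR has stable range 1. -/
import Mathlib


/-- A commutative ring has stable range 1 if whenever `aR + bR = R` there is `t` with
`a + b * t` a unit. -/
def HasStableRangeOne (R : Type*) [CommRing R] : Prop :=
  ∀ a b : R, Ideal.span {a} + Ideal.span {b} = ⊤ → ∃ t : R, IsUnit (a + b * t)

/-- A commutative ring with finitely many maximal ideals has stable range 1. -/
lemma srone_of_finite_max (A : Type*) [CommRing A]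
    (h : {M : Ideal A | M.IsMaximal}.Finite) :
    HasStableRangeOne A := by
  classical
  intro x y hxy
  set T : Finset (Ideal A) := h.toFinset.filter (fun M => x ∈ M) with hT
  set Tc : Finset (Ideal A) := h.toFinset.filter (fun M => x ∉ M) with hTc
  set J : Ideal A := Tc.inf id with hJdef
  have hJ : ¬((J : Set A) ⊆ ⋃ M ∈ (T : Set (Ideal A)), (M : Set A)) := by
    rw [Ideal.subset_union_prime ⊥ ⊥ (fun i hi _ _ =>
      (h.mem_toFinset.mp (Finset.mem_filter.mp hi).1).isPrime)]
    rintro ⟨M, hM, hle⟩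
    have hMmax : M.IsMaximal := h.mem_toFinset.mp (Finset.mem_filter.mp hM).1
    have hxM : x ∈ M := (Finset.mem_filter.mp hM).2
    obtain ⟨N, hN, hNM⟩ := (Ideal.IsPrime.inf_le' hMmax.isPrime).mp hle
    have hNmax : N.IsMaximal := h.mem_toFinset.mp (Finset.mem_filter.mp hN).1
    have : N = M := hNmax.eq_of_le hMmax.ne_top hNM
    exact (Finset.mem_filter.mp hN).2 (this ▸ hxM)
  obtain ⟨t, htJ, htT⟩ := Set.not_subset.mp hJ
  refine ⟨t, ?_⟩
  by_contra hnu
  obtain ⟨Mx, hMxmax, hle⟩ := Ideal.exists_le_maximal _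
    ((Ideal.span_singleton_eq_top).not.mpr hnu)
  have hu : x + y * t ∈ Mx := hle (Ideal.subset_span rfl)
  have hMxS : Mx ∈ h.toFinset := h.mem_toFinset.mpr hMxmax
  by_cases hx : x ∈ Mx
  · have hMxT : Mx ∈ T := Finset.mem_filter.mpr ⟨hMxS, hx⟩
    have hyt : y * t ∈ Mx := by
      have := Mx.sub_mem hu hx; simpa using this
    have hy : y ∉ Mx := fun hy => hMxmax.ne_top (top_le_iff.mp (hxy ▸
      sup_le ((Ideal.span_singleton_le_iff_mem _).mpr hx)
        ((Ideal.span_singleton_le_iff_mem _).mpr hy)))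
    have htMx : t ∉ Mx := fun htMx => htT (Set.mem_biUnion hMxT htMx)
    rcases hMxmax.isPrime.mem_or_mem hyt with h' | h'
    · exact hy h'
    · exact htMx h'
  · have hMxTc : Mx ∈ Tc := Finset.mem_filter.mpr ⟨hMxS, hx⟩
    have htMx : t ∈ Mx := (Finset.inf_le hMxTc : J ≤ id Mx) htJ
    exact hx (by simpa using Mx.sub_mem hu (Mx.mul_mem_left y htMx))

theorem almost_stable_range_one (R : Type*) [CommRing R] [IsDomain R] [IsBezout R]
    (hmin : ∀ x : R, x ≠ 0 → ¬IsUnit x → (Ideal.span {x}).minimalPrimes.Finite)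
    (hfin : ∀ P : Ideal R, P ≠ ⊥ → P.IsPrime →
      {M : Ideal R | M.IsMaximal ∧ P ≤ M}.Finite)
    (a : R) (ha : a ≠ 0) (hu : ¬IsUnit a) :
    HasStableRangeOne (R ⧸ Ideal.span {a}) := by
  have hKfin : {M : Ideal R | M.IsMaximal ∧ Ideal.span {a} ≤ M}.Finite := by
    have hsub : {M : Ideal R | M.IsMaximal ∧ Ideal.span {a} ≤ M} ⊆
        ⋃ P ∈ (Ideal.span {a}).minimalPrimes, {M : Ideal R | M.IsMaximal ∧ P ≤ M} := by
      rintro M ⟨hM, hle⟩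
      haveI := hM.isPrime
      obtain ⟨P, hP, hPM⟩ := Ideal.exists_minimalPrimes_le hle
      exact Set.mem_biUnion hP ⟨hM, hPM⟩
    refine Set.Finite.subset (Set.Finite.biUnion (hmin a ha hu) (fun P hP => ?_)) hsub
    refine hfin P ?_ hP.1.1
    intro hbot
    have haP : a ∈ P := hP.1.2 (Ideal.subset_span rfl)
    rw [hbot] at haP
    exact ha (Ideal.mem_bot.mp haP)
  have hmaxfin : {M : Ideal (R ⧸ Ideal.span {a}) | M.IsMaximal}.Finite := by
    have hinj : Set.InjOn (Ideal.comap (Ideal.Quotient.mk (Ideal.span {a})))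
        {M : Ideal (R ⧸ Ideal.span {a}) | M.IsMaximal} := by
      intro M1 _ M2 _ hMM
      have h1 := Ideal.map_comap_of_surjective _ Ideal.Quotient.mk_surjective M1
      have h2 := Ideal.map_comap_of_surjective _ Ideal.Quotient.mk_surjective M2
      rw [← h1, ← h2, hMM]
    refine Set.Finite.of_finite_image (hKfin.subset ?_) hinj
    rintro _ ⟨M, hM, rfl⟩
    refine ⟨Ideal.comap_isMaximal_of_surjective _ Ideal.Quotient.mk_surjective (H := hM),
      fun r hr => ?_⟩
    show Ideal.Quotient.mk _ r ∈ M
    rw [Ideal.Quotient.eq_zero_iff_mem.mpr hr]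
    exact M.zero_mem
  exact srone_of_finite_max _ hmaxfin
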